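/- arXiv:1909.11152 — 4 statements merged into one kernel-verified Lean document; each statement's English description precedes it below -/
import Mathlib

section
/- Any triangle in the Euclidean plane whose three side lengths are all at least 1 and whose area is at most 1/4 has at least one angle of measure at least 2π/3. -/
open Real EuclideanGeometry

noncomputable def triArea (A B C : EuclideanSpace ℝ (Fin 2)) : ℝ :=
  |(B 0 - A 0) * (C 1 - A 1) - (B 1 - A 1) * (C 0 - A 0)| / 2

lemma key_vec (x y : EuclideanSpace ℝ (Fin 2)) :
    Real.sin (InnerProductGeometry.angle x y) * (‖x‖ * ‖y‖) = |x 0 * y 1 - x 1 * y 0| := by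
  rw [InnerProductGeometry.sin_angle_mul_norm_mul_norm]
  have h : ∀ u v : EuclideanSpace ℝ (Fin 2), (inner ℝ u v : ℝ) = u 0 * v 0 + u 1 * v 1 := by
    intro u v
    simp [PiLp.inner_apply, Fin.sum_univ_two, mul_comm]
  rw [h, h, h]
  rw [show (x 0 * x 0 + x 1 * x 1) * (y 0 * y 0 + y 1 * y 1) -
      (x 0 * y 0 + x 1 * y 1) * (x 0 * y 0 + x 1 * y 1) = (x 0 * y 1 - x 1 * y 0) ^ 2 by ring]
  exact Real.sqrt_sq_eq_abs _

lemma sin_angle_A (A B C : EuclideanSpace ℝ (Fin 2)) :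
    Real.sin (∠ B A C) * (dist A B * dist A C) = 2 * triArea A B C := by
  have h1 : dist A B = ‖B -ᵥ A‖ := by rw [dist_comm]; exact (dist_eq_norm_vsub _ _ _)
  have h2 : dist A C = ‖C -ᵥ A‖ := by rw [dist_comm]; exact (dist_eq_norm_vsub _ _ _)
  rw [h1, h2]
  have := key_vec (B -ᵥ A) (C -ᵥ A)
  rw [EuclideanGeometry.angle, this]
  simp only [vsub_eq_sub, PiLp.sub_apply, triArea]
  ring

theorem stmt_0 (A B C : EuclideanSpace ℝ (Fin 2))
    (hncol : ¬ Collinear ℝ ({A, B, C} : Set (EuclideanSpace ℝ (Fin 2))))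
    (hAB : 1 ≤ dist A B) (hBC : 1 ≤ dist B C) (hCA : 1 ≤ dist C A)
    (harea : triArea A B C ≤ 1 / 4) :
    2 * π / 3 ≤ ∠ B A C ∨ 2 * π / 3 ≤ ∠ A B C ∨ 2 * π / 3 ≤ ∠ A C B := by
  by_contra hcon
  push_neg at hcon
  obtain ⟨h1, h2, h3⟩ := hcon
  have hab : A ≠ B := by intro h; rw [h] at hAB; simp at hAB; linarith
  have hbc : B ≠ C := by intro h; rw [h] at hBC; simp at hBC; linarith
  have hca : C ≠ A := by intro h; rw [h] at hCA; simp at hCA; linarith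
  have hsum : ∠ C A B + ∠ A B C + ∠ B C A = π :=
    EuclideanGeometry.angle_add_angle_add_angle_eq_pi B hca.symm
  rw [EuclideanGeometry.angle_comm C A B, EuclideanGeometry.angle_comm B C A] at hsum
  -- areas under permutation
  have hA2 : triArea B A C = triArea A B C := by
    unfold triArea
    rw [show (A 0 - B 0) * (C 1 - B 1) - (A 1 - B 1) * (C 0 - B 0)
        = -((B 0 - A 0) * (C 1 - A 1) - (B 1 - A 1) * (C 0 - A 0)) by ring, abs_neg]
  have hA3 : triArea C A B = triArea A B C := by
    unfold triArea
    rw [show (A 0 - C 0) * (B 1 - C 1) - (A 1 - C 1) * (B 0 - C 0)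
        = (B 0 - A 0) * (C 1 - A 1) - (B 1 - A 1) * (C 0 - A 0) by ring]
  -- sin bounds
  have hs1 := sin_angle_A A B C
  have hs2 := sin_angle_A B A C
  have hs3 := sin_angle_A C A B
  rw [hA2] at hs2
  rw [hA3] at hs3
  have hd1 : dist B A = dist A B := dist_comm _ _
  have hd2 : dist B C = dist C B := dist_comm _ _
  rw [hd1] at hs2
  have sinle : ∀ θ : ℝ, Real.sin θ * (dist A B * dist A C) ≤ 1/2 →
      1 ≤ dist A B → 1 ≤ dist A C → 0 ≤ Real.sin θ → Real.sin θ ≤ 1/2 := by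
    intro θ h ha hb hsn
    have hp : 1 ≤ dist A B * dist A C := one_le_mul_of_one_le_of_one_le ha hb
    calc Real.sin θ = Real.sin θ * 1 := by ring
      _ ≤ Real.sin θ * (dist A B * dist A C) := by
          exact mul_le_mul_of_nonneg_left hp hsn
      _ ≤ 1/2 := h
  have sn1 : 0 ≤ Real.sin (∠ B A C) :=
    Real.sin_nonneg_of_nonneg_of_le_pi (EuclideanGeometry.angle_nonneg _ _ _)
      (EuclideanGeometry.angle_le_pi _ _ _)
  have sn2 : 0 ≤ Real.sin (∠ A B C) :=
    Real.sin_nonneg_of_nonneg_of_le_pi (EuclideanGeometry.angle_nonneg _ _ _)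
      (EuclideanGeometry.angle_le_pi _ _ _)
  have sn3 : 0 ≤ Real.sin (∠ A C B) :=
    Real.sin_nonneg_of_nonneg_of_le_pi (EuclideanGeometry.angle_nonneg _ _ _)
      (EuclideanGeometry.angle_le_pi _ _ _)
  have hAC : 1 ≤ dist A C := by rw [dist_comm]; exact hCA
  have hCB : 1 ≤ dist C B := by rw [dist_comm]; exact hBC
  have b1 : Real.sin (∠ B A C) ≤ 1/2 := sinle _ (by linarith [hs1]) hAB hAC sn1
  have b2 : Real.sin (∠ A B C) ≤ 1/2 := by
    have : Real.sin (∠ A B C) * (dist A B * dist B C) ≤ 1/2 := by linarith [hs2]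
    rw [hd2] at this
    have hp : 1 ≤ dist A B * dist C B := one_le_mul_of_one_le_of_one_le hAB hCB
    calc Real.sin (∠ A B C) = Real.sin (∠ A B C) * 1 := by ring
      _ ≤ Real.sin (∠ A B C) * (dist A B * dist C B) := mul_le_mul_of_nonneg_left hp sn2
      _ ≤ 1/2 := this
  have b3 : Real.sin (∠ A C B) ≤ 1/2 := by
    have : Real.sin (∠ A C B) * (dist C A * dist C B) ≤ 1/2 := by linarith [hs3]
    have hp : 1 ≤ dist C A * dist C B := one_le_mul_of_one_le_of_one_le hCA hCB
    calc Real.sin (∠ A C B) = Real.sin (∠ A C B) * 1 := by ring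
      _ ≤ Real.sin (∠ A C B) * (dist C A * dist C B) := mul_le_mul_of_nonneg_left hp sn3
      _ ≤ 1/2 := this
  -- one angle is ≥ π/3
  have sin_big : ∀ θ : ℝ, π/3 ≤ θ → θ ≤ 2*π/3 → 1/2 < Real.sin θ := by
    intro θ hl hr
    have hpi := Real.pi_pos
    have hs3' : Real.sin (π/3) = Real.sqrt 3 / 2 := Real.sin_pi_div_three
    have hhalf : (1:ℝ)/2 < Real.sqrt 3 / 2 := by
      have : (1:ℝ) < Real.sqrt 3 := by
        rw [show (1:ℝ) = Real.sqrt 1 by simp]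
        exact Real.sqrt_lt_sqrt (by norm_num) (by norm_num)
      linarith
    rcases le_or_gt θ (π/2) with hc | hc
    · have : Real.sin (π/3) ≤ Real.sin θ := by
        apply Real.strictMonoOn_sin.monotoneOn _ _ hl
        · constructor <;> [linarith; linarith]
        · constructor <;> [linarith; linarith]
      linarith
    · have heq : Real.sin θ = Real.sin (π - θ) := (Real.sin_pi_sub θ).symm
      have : Real.sin (π/3) ≤ Real.sin (π - θ) := by
        apply Real.strictMonoOn_sin.monotoneOn _ _ (by linarith)
        · constructor <;> [linarith; linarith]
        · constructor <;> [linarith; linarith]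
      linarith
  have hge : π/3 ≤ ∠ B A C ∨ π/3 ≤ ∠ A B C ∨ π/3 ≤ ∠ A C B := by
    by_contra hc
    push_neg at hc
    obtain ⟨c1, c2, c3⟩ := hc
    linarith
  rcases hge with h | h | h
  · linarith [sin_big _ h (le_of_lt h1), b1]
  · linarith [sin_big _ h (le_of_lt h2), b2]
  · linarith [sin_big _ h (le_of_lt h3), b3]
end

section
/- Let A, B, C be non-collinear points with all pairwise distances at least 1 and triangle area at most 1/4, with AB the longest side. If D is a point inside or on the triangle ABC with |CD| ≥ 1, then at least one of the angles ∠ACD or ∠BCD is strictly greater than π/2. -/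
open Real EuclideanGeometry

lemma aux_one_le_sq {r : ℝ} (hr : 1 ≤ r) : 1 ≤ r^2 := by nlinarith

lemma aux_sq_le_sq {r r' : ℝ} (h : 0 ≤ r) (h' : r ≤ r') : r^2 ≤ r'^2 := by nlinarith

lemma aux_abs_sq {x : ℝ} (h : |x| ≤ 1/2) : x^2 ≤ 1/4 := by
  nlinarith [sq_abs x, abs_nonneg x]

/-- Scalar core: `S = ⟪u,v⟫`, `U = ‖u‖²`, `V = ‖v‖²`, `W = ‖au+bv‖²`,
`c` the cross product of `u` and `v`. -/
lemma key_scalar (S U V W c a b : ℝ)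
    (hlag : S^2 + c^2 = U * V)
    (hU1 : 1 ≤ U) (hV1 : 1 ≤ V) (hW1 : 1 ≤ W)
    (hc4 : c^2 ≤ 1/4)
    (hL1' : 2 * S ≤ U) (hL2' : 2 * S ≤ V)
    (ha : 0 ≤ a) (hb : 0 ≤ b) (hab : a + b ≤ 1)
    (hP' : 0 ≤ a*U + b*S) (hQ' : 0 ≤ a*S + b*V)
    (hW' : W = a^2*U + 2*a*b*S + b^2*V) : False := by
  have hUV : 1 ≤ U * V := by nlinarith
  have hS2 : 3/4 ≤ S^2 := by linarith
  have hSneg : S < 0 := by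
    by_contra hSn
    push_neg at hSn
    have h4 : 2*S*(2*S) ≤ U*V :=
      mul_le_mul hL1' hL2' (by linarith) (by linarith)
    nlinarith
  have hSle : S < -1/4 := by nlinarith
  have hab2 : a * b ≤ 1 := by nlinarith
  have hWs : W * S ≤ S := by nlinarith
  have habc : a*b*c^2 ≤ 1/4 := by nlinarith [sq_nonneg c, mul_nonneg ha hb]
  have hPQid : (a*U + b*S) * (a*S + b*V) = W*S + a*b*c^2 := by
    rw [hW']; linear_combination (-(a*b)) * hlag
  nlinarith [mul_nonneg hP' hQ']

/-- Algebraic core in coordinates. -/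
lemma key_alg (u0 u1 v0 v1 a b : ℝ)
    (hU : 1 ≤ u0^2 + u1^2) (hV : 1 ≤ v0^2 + v1^2)
    (hW : 1 ≤ (a*u0 + b*v0)^2 + (a*u1 + b*v1)^2)
    (hL1 : v0^2 + v1^2 ≤ (v0 - u0)^2 + (v1 - u1)^2)
    (hL2 : u0^2 + u1^2 ≤ (v0 - u0)^2 + (v1 - u1)^2)
    (hc : (u0*v1 - u1*v0)^2 ≤ 1/4)
    (ha : 0 ≤ a) (hb : 0 ≤ b) (hab : a + b ≤ 1)
    (hP : 0 ≤ u0*(a*u0 + b*v0) + u1*(a*u1 + b*v1))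
    (hQ : 0 ≤ v0*(a*u0 + b*v0) + v1*(a*u1 + b*v1)) : False := by
  refine key_scalar (u0*v0 + u1*v1) (u0^2 + u1^2) (v0^2 + v1^2)
    ((a*u0 + b*v0)^2 + (a*u1 + b*v1)^2) (u0*v1 - u1*v0) a b
    (by ring) hU hV hW hc ?_ ?_ ha hb hab ?_ ?_ (by ring)
  · linarith [hL1]
  · linarith [hL2]
  · linarith [hP]
  · linarith [hQ]

theorem stmt_2 (A B C D : EuclideanSpace ℝ (Fin 2))
    (hncol : ¬ Collinear ℝ ({A, B, C} : Set (EuclideanSpace ℝ (Fin 2))))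
    (hAB : 1 ≤ dist A B) (hBC : 1 ≤ dist B C) (hCA : 1 ≤ dist C A)
    (harea : triArea A B C ≤ 1 / 4)
    (hlong1 : dist B C ≤ dist A B) (hlong2 : dist A C ≤ dist A B)
    (hD : D ∈ convexHull ℝ ({A, B, C} : Set (EuclideanSpace ℝ (Fin 2))))
    (hCD : 1 ≤ dist C D) :
    π / 2 < ∠ A C D ∨ π / 2 < ∠ B C D := by
  by_contra hcon
  push_neg at hcon
  obtain ⟨hang1, hang2⟩ := hcon
  have hdsq : ∀ X Y : EuclideanSpace ℝ (Fin 2),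
      (dist X Y)^2 = (X 0 - Y 0)^2 + (X 1 - Y 1)^2 := by
    intro X Y
    rw [EuclideanSpace.dist_eq, Real.sq_sqrt (by positivity)]
    simp [Fin.sum_univ_two, Real.dist_eq, sq_abs]
  -- squared distance facts
  have hU : 1 ≤ (A 0 - C 0)^2 + (A 1 - C 1)^2 := by
    have h := hdsq C A
    linarith [aux_one_le_sq hCA]
  have hV : 1 ≤ (B 0 - C 0)^2 + (B 1 - C 1)^2 := by
    have h := hdsq B C
    linarith [aux_one_le_sq hBC]
  have hW : 1 ≤ (D 0 - C 0)^2 + (D 1 - C 1)^2 := by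
    have h := hdsq C D
    linarith [aux_one_le_sq hCD]
  have hL1 : (B 0 - C 0)^2 + (B 1 - C 1)^2
      ≤ ((B 0 - C 0) - (A 0 - C 0))^2 + ((B 1 - C 1) - (A 1 - C 1))^2 := by
    have h1 := hdsq B C
    have h2 := hdsq A B
    linarith [aux_sq_le_sq dist_nonneg hlong1]
  have hL2 : (A 0 - C 0)^2 + (A 1 - C 1)^2
      ≤ ((B 0 - C 0) - (A 0 - C 0))^2 + ((B 1 - C 1) - (A 1 - C 1))^2 := by
    have h1 := hdsq A C
    have h2 := hdsq A B
    linarith [aux_sq_le_sq dist_nonneg hlong2]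
  -- area fact
  have hc : ((A 0 - C 0)*(B 1 - C 1) - (A 1 - C 1)*(B 0 - C 0))^2 ≤ 1/4 := by
    rw [triArea] at harea
    have h2 : ((B 0 - A 0) * (C 1 - A 1) - (B 1 - A 1) * (C 0 - A 0))^2 ≤ 1/4 :=
      aux_abs_sq (by linarith)
    have h3 : ((A 0 - C 0)*(B 1 - C 1) - (A 1 - C 1)*(B 0 - C 0))^2
        = ((B 0 - A 0) * (C 1 - A 1) - (B 1 - A 1) * (C 0 - A 0))^2 := by ring
    linarith
  -- convex hull representation
  rw [show ({A, B, C} : Set (EuclideanSpace ℝ (Fin 2))) = insert A {B, C} from rfl,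
    convexHull_insert ⟨B, by simp⟩, convexHull_pair, mem_convexJoin] at hD
  obtain ⟨x, hx, z, hz, hDseg⟩ := hD
  rw [Set.mem_singleton_iff] at hx
  obtain ⟨s, s', hs, hs', hss, hzeq⟩ := hz
  obtain ⟨t, t', ht, ht', htt, hDeq⟩ := hDseg
  rw [hx] at hDeq
  have hcomp : ∀ i, D i = t * A i + t' * (s * B i + s' * C i) := by
    intro i
    rw [← hDeq, ← hzeq]
    simp
    ring
  have hb0 : 0 ≤ t' * s := mul_nonneg ht' hs
  have hab1 : t + t' * s ≤ 1 := by
    have h1 : t' * s ≤ t' * 1 := mul_le_mul_of_nonneg_left (by linarith) ht'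
    linarith
  have hweq0 : D 0 - C 0 = t * (A 0 - C 0) + (t' * s) * (B 0 - C 0) := by
    have h0 := hcomp 0
    have hs'' : s' = 1 - s := by linarith
    have ht'' : t' = 1 - t := by linarith
    rw [h0, hs'', ht'']; ring
  have hweq1 : D 1 - C 1 = t * (A 1 - C 1) + (t' * s) * (B 1 - C 1) := by
    have h1 := hcomp 1
    have hs'' : s' = 1 - s := by linarith
    have ht'' : t' = 1 - t := by linarith
    rw [h1, hs'', ht'']; ring
  -- inner product nonnegativity from angles
  have hinner : ∀ X : EuclideanSpace ℝ (Fin 2), ∠ X C D ≤ π / 2 →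
      0 ≤ (X 0 - C 0) * (D 0 - C 0) + (X 1 - C 1) * (D 1 - C 1) := by
    intro X hX
    have hcos : 0 ≤ Real.cos (∠ X C D) := by
      apply Real.cos_nonneg_of_mem_Icc
      constructor
      · linarith [EuclideanGeometry.angle_nonneg X C D, Real.pi_pos]
      · exact hX
    have h1 := InnerProductGeometry.cos_angle_mul_norm_mul_norm (X -ᵥ C) (D -ᵥ C)
    have h2 : 0 ≤ (inner ℝ (X -ᵥ C) (D -ᵥ C) : ℝ) := by
      rw [← h1]
      exact mul_nonneg hcos (by positivity)
    have h3 : (inner ℝ (X -ᵥ C) (D -ᵥ C) : ℝ)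
        = (X 0 - C 0) * (D 0 - C 0) + (X 1 - C 1) * (D 1 - C 1) := by
      simp only [PiLp.inner_apply, RCLike.inner_apply, conj_trivial, Fin.sum_univ_two]
      simp [PiLp.sub_apply]
      try ring
    linarith [h3 ▸ h2]
  have hP := hinner A hang1
  have hQ := hinner B hang2
  -- apply the algebraic core
  refine key_alg (A 0 - C 0) (A 1 - C 1) (B 0 - C 0) (B 1 - C 1) t (t' * s)
    hU hV ?_ hL1 hL2 hc ht hb0 hab1 ?_ ?_
  · rw [← hweq0, ← hweq1]; exact hW
  · rw [← hweq0, ← hweq1]; exact hP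
  · rw [← hweq0, ← hweq1]; exact hQ
end

section
/- A triangle with all side lengths at least 1 and at most r, and with area at most 1/4, has perimeter at most 2r + 1/4. -/
lemma onevar' (u : ℝ) (h1 : 1/4 < u) (h2 : u ≤ 1) : 1 < u * (2-u) * (2-u) * (4-u) := by
  nlinarith [sq_nonneg (u - 1/4), sq_nonneg (u-1), mul_pos (show (0:ℝ)<u by linarith) (show (0:ℝ)<2-u by linarith)]

lemma key2' (u v w : ℝ) (h : 1/4 < u) (hvu : u ≤ v) (hwu : u ≤ w)
    (hv2 : 2 - u ≤ v) (hw2 : 2 - u ≤ w) : 1 < (u+v+w)*v*w*u := by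
  have hu0 : 0 < u := by linarith
  have hv0 : 0 < v := by linarith
  have hw0 : 0 < w := by linarith
  rcases le_or_gt u 1 with hle | hgt
  · have p2 : (0:ℝ) < 2 - u := by linarith
    have s1 : (4-u)*(2-u) ≤ (u+v+w)*v :=
      mul_le_mul (by linarith) hv2 p2.le (by linarith)
    have q1 : (0:ℝ) < (4-u)*(2-u) := by nlinarith
    have s2 : ((4-u)*(2-u))*(2-u) ≤ ((u+v+w)*v)*w :=
      mul_le_mul s1 hw2 p2.le (by linarith)
    have s3 : (((4-u)*(2-u))*(2-u))*u ≤ (((u+v+w)*v)*w)*u :=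
      mul_le_mul_of_nonneg_right s2 hu0.le
    have := onevar' u h hle
    nlinarith [this]
  · have s1 : (3*u)*u ≤ (u+v+w)*v :=
      mul_le_mul (by linarith) hvu hu0.le (by linarith)
    have q1 : (0:ℝ) < (3*u)*u := by positivity
    have s2 : ((3*u)*u)*u ≤ ((u+v+w)*v)*w :=
      mul_le_mul s1 hwu hu0.le (by linarith)
    have s3 : (((3*u)*u)*u)*u ≤ (((u+v+w)*v)*w)*u :=
      mul_le_mul_of_nonneg_right s2 hu0.le
    have h4 : 1 < u*u := by nlinarith
    have h5 : 1 < (u*u)*(u*u) := by nlinarith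
    nlinarith [s3, h5]

lemma key' (a b c : ℝ) (ha : 1 ≤ a) (hb : 1 ≤ b) (hca : a ≤ c) (hcb : b ≤ c)
    (hP : (a+b+c)*(-a+b+c)*(a-b+c)*(a+b-c) ≤ 1) : a + b - c ≤ 1/4 := by
  by_contra h
  push_neg at h
  have := key2' (a+b-c) (-a+b+c) (a-b+c) h (by linarith) (by linarith) (by linarith) (by linarith)
  nlinarith [this]

lemma dist_sq' (X Y : EuclideanSpace ℝ (Fin 2)) :
    dist X Y ^ 2 = (X 0 - Y 0)^2 + (X 1 - Y 1)^2 := by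
  rw [EuclideanSpace.dist_eq, Real.sq_sqrt]
  · simp [Fin.sum_univ_two, Real.dist_eq, sq_abs]
  · positivity

lemma heron' (A B C : EuclideanSpace ℝ (Fin 2)) (h : triArea A B C ≤ 1/4) :
    (dist A B + dist B C + dist C A) * (-dist A B + dist B C + dist C A) *
      (dist A B - dist B C + dist C A) * (dist A B + dist B C - dist C A) ≤ 1 := by
  set D := (B 0 - A 0) * (C 1 - A 1) - (B 1 - A 1) * (C 0 - A 0) with hD
  have habs : |D| ≤ 1/2 := by
    have : |D| / 2 ≤ 1/4 := h
    linarith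
  clear_value D
  have hD2 : D^2 ≤ 1/4 := by
    have := abs_le.mp habs
    nlinarith [this.1, this.2]
  have ha2 : dist A B ^ 2 = (A 0 - B 0)^2 + (A 1 - B 1)^2 := dist_sq' A B
  have hb2 : dist B C ^ 2 = (B 0 - C 0)^2 + (B 1 - C 1)^2 := dist_sq' B C
  have hc2 : dist C A ^ 2 = (C 0 - A 0)^2 + (C 1 - A 1)^2 := dist_sq' C A
  have hident : (dist A B + dist B C + dist C A) * (-dist A B + dist B C + dist C A) *
      (dist A B - dist B C + dist C A) * (dist A B + dist B C - dist C A) = 4 * D^2 := by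
    have e : (dist A B + dist B C + dist C A) * (-dist A B + dist B C + dist C A) *
      (dist A B - dist B C + dist C A) * (dist A B + dist B C - dist C A)
      = 2*(dist A B^2)*(dist B C^2) + 2*(dist B C^2)*(dist C A^2) + 2*(dist C A^2)*(dist A B^2)
        - (dist A B^2)*(dist A B^2) - (dist B C^2)*(dist B C^2) - (dist C A^2)*(dist C A^2) := by
      ring
    rw [e, ha2, hb2, hc2, hD]
    ring
  rw [hident]
  linarith

theorem stmt_9 (r : ℝ) (A B C : EuclideanSpace ℝ (Fin 2))
    (hAB : 1 ≤ dist A B) (hBC : 1 ≤ dist B C) (hCA : 1 ≤ dist C A)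
    (hAB' : dist A B ≤ r) (hBC' : dist B C ≤ r) (hCA' : dist C A ≤ r)
    (harea : triArea A B C ≤ 1 / 4) :
    dist A B + dist B C + dist C A ≤ 2 * r + 1 / 4 := by
  have hP := heron' A B C harea
  set a := dist A B
  set b := dist B C
  set c := dist C A
  rcases le_total a b with h1 | h1
  · rcases le_total b c with h2 | h2
    · -- c largest
      have := key' a b c hAB hBC (le_trans h1 h2) h2 (by nlinarith [hP])
      linarith
    · -- b largest
      have := key' c a b hCA hAB h2 h1 (by nlinarith [hP])
      linarith
  · rcases le_total a c with h2 | h2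
    · -- c largest
      have := key' a b c hAB hBC h2 (le_trans h1 h2) (by nlinarith [hP])
      linarith
    · -- a largest
      have := key' b c a hBC hCA h1 h2 (by nlinarith [hP])
      linarith
end

section
/- Let ABC be a triangle with all sides of length at least 1, area at most 1/4, and longest side AB. Then the angle at C is at least 2π/3 and the foot of the altitude from C lies strictly inside segment AB. -/
open Real EuclideanGeometry RealInnerProductSpace

set_option maxHeartbeats 1000000 in
theorem stmt_17 (A B C : EuclideanSpace ℝ (Fin 2))
    (hncol : ¬ Collinear ℝ ({A, B, C} : Set (EuclideanSpace ℝ (Fin 2))))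
    (hAB : 1 ≤ dist A B) (hBC : 1 ≤ dist B C) (hCA : 1 ≤ dist C A)
    (harea : triArea A B C ≤ 1 / 4)
    (hlong1 : dist B C ≤ dist A B) (hlong2 : dist A C ≤ dist A B) :
    2 * π / 3 ≤ ∠ A C B ∧
    ∃ F ∈ openSegment ℝ A B, (inner ℝ (C - F) (B - A) : ℝ) = 0 := by
  constructor
  · -- angle part
    set x : EuclideanSpace ℝ (Fin 2) := A - C with hx
    set y : EuclideanSpace ℝ (Fin 2) := B - C with hy
    have hxn : ‖x‖ = dist C A := by rw [dist_eq_norm, ← norm_neg]; congr 1; simp [hx]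
    have hyn : ‖y‖ = dist B C := by rw [dist_eq_norm]
    have hxyn : ‖x - y‖ = dist A B := by
      rw [dist_eq_norm]; congr 1; simp [hx, hy]
    have hangle : ∠ A C B = InnerProductGeometry.angle x y := rfl
    have hinner : 2 * ⟪x, y⟫ = ‖x‖ ^ 2 + ‖y‖ ^ 2 - ‖x - y‖ ^ 2 := by
      have := norm_sub_sq_real x y
      linarith
    have hprod : (1 : ℝ) ≤ ‖x‖ * ‖y‖ := by
      rw [hxn, hyn]; nlinarith
    have hprodpos : (0 : ℝ) < ‖x‖ * ‖y‖ := by linarith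
    -- cos ≤ 1/2
    have hinnle : ⟪x, y⟫ ≤ ‖x‖ * ‖y‖ / 2 := by
      rw [hxn, hyn, hxyn] at hinner
      rw [hxn, hyn]
      nlinarith [mul_nonneg (sub_nonneg.2 hlong1) (sub_nonneg.2 hlong2),
        dist_comm A C, dist_comm C A]
    have hcos : Real.cos (∠ A C B) ≤ 1 / 2 := by
      rw [hangle, InnerProductGeometry.cos_angle]
      rw [div_le_iff₀ hprodpos]; linarith
    -- sin ≤ 1/2
    have hcross : ⟪x, x⟫ * ⟪y, y⟫ - ⟪x, y⟫ * ⟪x, y⟫ =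
        ((B 0 - A 0) * (C 1 - A 1) - (B 1 - A 1) * (C 0 - A 0)) ^ 2 := by
      simp only [hx, hy, PiLp.inner_apply, RCLike.inner_apply, starRingEnd_apply,
        star_trivial, Fin.sum_univ_two, PiLp.sub_apply]
      ring
    have hsinmul : Real.sin (∠ A C B) * (‖x‖ * ‖y‖) =
        |(B 0 - A 0) * (C 1 - A 1) - (B 1 - A 1) * (C 0 - A 0)| := by
      rw [hangle, InnerProductGeometry.sin_angle_mul_norm_mul_norm, hcross,
        Real.sqrt_sq_eq_abs]
    have hsinnn : 0 ≤ Real.sin (∠ A C B) :=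
      Real.sin_nonneg_of_nonneg_of_le_pi (angle_nonneg _ _ _) (angle_le_pi _ _ _)
    have hsin : Real.sin (∠ A C B) ≤ 1 / 2 := by
      have h2 : Real.sin (∠ A C B) * (‖x‖ * ‖y‖) ≤ 1 / 2 := by
        rw [hsinmul]; unfold triArea at harea; linarith
      nlinarith
    -- conclude
    by_contra hcon
    push_neg at hcon
    have hθ0 : 0 ≤ ∠ A C B := angle_nonneg _ _ _
    have h23pi : 2 * π / 3 ≤ π := by nlinarith [Real.pi_pos]
    have hcos2 : Real.cos (2 * π / 3) < Real.cos (∠ A C B) :=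
      Real.cos_lt_cos_of_nonneg_of_le_pi hθ0 h23pi hcon
    have hval : Real.cos (2 * π / 3) = -(1 / 2) := by
      rw [show 2 * π / 3 = π - π / 3 by ring, Real.cos_pi_sub, Real.cos_pi_div_three]
    rw [hval] at hcos2
    nlinarith [Real.sin_sq_add_cos_sq (∠ A C B)]
  · -- foot of altitude
    set u : EuclideanSpace ℝ (Fin 2) := C - A with hu
    set v : EuclideanSpace ℝ (Fin 2) := B - A with hv
    have hun : ‖u‖ = dist C A := by rw [dist_eq_norm]
    have hvn : ‖v‖ = dist A B := by rw [dist_eq_norm, ← norm_neg]; congr 1; simp [hv]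
    have huvn : ‖u - v‖ = dist B C := by
      rw [dist_eq_norm, ← norm_neg]; congr 1; simp [hu, hv]
    have hinner : 2 * ⟪u, v⟫ = ‖u‖ ^ 2 + ‖v‖ ^ 2 - ‖u - v‖ ^ 2 := by
      have := norm_sub_sq_real u v
      linarith
    rw [hun, hvn, huvn] at hinner
    have hvpos : (0 : ℝ) < ‖v‖ ^ 2 := by rw [hvn]; nlinarith
    have hdpos : (0 : ℝ) < ⟪u, v⟫ := by nlinarith [dist_comm A C, dist_comm C A]
    have hdlt : ⟪u, v⟫ < ‖v‖ ^ 2 := by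
      rw [hvn]; nlinarith [dist_comm A C, dist_comm C A]
    set t : ℝ := ⟪u, v⟫ / ‖v‖ ^ 2 with ht
    have ht0 : 0 < t := div_pos hdpos hvpos
    have ht1 : t < 1 := (div_lt_one hvpos).2 hdlt
    refine ⟨A + t • v, ⟨1 - t, t, by linarith, ht0, by ring, ?_⟩, ?_⟩
    · simp only [hv, smul_sub]
      module
    · have : C - (A + t • v) = u - t • v := by simp only [hu]; abel
      rw [this, inner_sub_left, real_inner_smul_left,
        real_inner_self_eq_norm_sq, ht]
      field_simp
      rw [div_self (by intro h; rw [h] at hvpos; norm_num at hvpos), sub_self, mul_zero]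
end
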